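/- Let M ∈ ℝ^{m×k} be a matrix and let H_k = {-1,1}^k. If rank of the augmented matrix [Mᵀ; mᵀ] (for any vector m ∈ ℝ^k appended as a row) is at most k-1, then there exists a point v ∈ H_k such that the image of v under x ↦ [Mᵀ; mᵀ]x is not an extreme point (vertex) of the convex hull of the image of H_k. -/
import Mathlib


/-- If the augmented matrix [Mᵀ; mᵀ] has rank at most k-1, then some hypercube
vertex v ∈ {-1,1}^k is mapped into the convex hull of the images of the other
hypercube vertices (so its image is not a unique vertex of the convex hull of
the image of the hypercube). -/
theorem rank_deficient_collapses_hypercube_vertex (k : ℕ) (hk : 1 ≤ k)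
    (M : Matrix (Fin k) (Fin k) ℝ) (mv : Fin k → ℝ)
    (A : Matrix (Fin (k + 1)) (Fin k) ℝ)
    (hA : ∀ j, (∀ i : Fin k, A i.castSucc j = M.transpose i j) ∧ A (Fin.last k) j = mv j)
    (hrank : A.rank ≤ k - 1) :
    ∃ v : Fin k → ℝ, (∀ j, v j = 1 ∨ v j = -1) ∧
      A.mulVec v ∈ convexHull ℝ
        (A.mulVec '' {h : Fin k → ℝ | (∀ j, h j = 1 ∨ h j = -1) ∧ h ≠ v}) := by
  have hrk : A.rank < k := lt_of_le_of_lt hrank (Nat.sub_lt hk one_pos)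
  have hker : LinearMap.ker A.mulVecLin ≠ ⊥ := by
    intro h
    have hinj : Function.Injective A.mulVecLin := LinearMap.ker_eq_bot.mp h
    have h2 := LinearMap.finrank_range_of_inj hinj
    rw [Matrix.rank, h2] at hrk
    simp at hrk
  obtain ⟨u, humem, hune⟩ := Submodule.exists_mem_ne_zero_of_ne_bot hker
  have hAu : A.mulVec u = 0 := humem
  obtain ⟨j0, hj0⟩ : ∃ j, u j ≠ 0 := by
    by_contra h
    push_neg at h
    exact hune (funext h)
  set s : ℝ := ∑ j, |u j| with hs_def
  have hs : 0 < s := by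
    apply Finset.sum_pos' (fun j _ => abs_nonneg _)
    exact ⟨j0, Finset.mem_univ _, abs_pos.mpr hj0⟩
  set v : Fin k → ℝ := fun j => if 0 ≤ u j then 1 else -1 with hv_def
  have hv : ∀ j, v j = 1 ∨ v j = -1 := by
    intro j; by_cases h : 0 ≤ u j <;> simp [hv_def, h]
  have hvu : ∀ j, v j * |u j| = u j := by
    intro j
    by_cases h : 0 ≤ u j
    · simp [hv_def, h, abs_of_nonneg h]
    · push_neg at h
      simp [hv_def, not_le.mpr h, abs_of_neg h]
  refine ⟨v, hv, ?_⟩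
  set w : Fin k → ℝ := fun j => |u j| / s with hw_def
  have hw0 : ∀ j, 0 ≤ w j := fun j => div_nonneg (abs_nonneg _) hs.le
  have hw1 : ∑ j, w j = 1 := by
    rw [hw_def, ← Finset.sum_div]; exact div_self hs.ne'
  set vert : Fin k → Fin k → ℝ := fun j => Function.update v j (-(v j)) with hvert_def
  have hvertmem : ∀ j, vert j ∈ {h : Fin k → ℝ | (∀ j, h j = 1 ∨ h j = -1) ∧ h ≠ v} := by
    intro j
    constructor
    · intro i
      by_cases h : i = j
      · subst h; simp only [hvert_def, Function.update_self]
        rcases hv i with h1 | h1 <;> simp [h1]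
      · rw [hvert_def]; simp only [Function.update_of_ne h]; exact hv i
    · intro heq
      have := congrFun heq j
      simp only [hvert_def, Function.update_self] at this
      rcases hv j with h1 | h1 <;> rw [h1] at this <;> norm_num at this
  have hsum : ∑ j, w j • vert j = v - (2 / s) • u := by
    funext i
    simp only [Finset.sum_apply, Pi.smul_apply, Pi.sub_apply, smul_eq_mul]
    have hvi : ∀ j, vert j i = v i - (if i = j then 2 * v i else 0) := by
      intro j
      by_cases h : i = j
      · subst h; simp only [hvert_def]
        rw [Function.update_self]; simp; ring
      · rw [hvert_def]; simp only [Function.update_of_ne h, if_neg h, sub_zero]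
    calc ∑ j, w j * vert j i
        = ∑ j, (w j * v i - (if i = j then w j * (2 * v i) else 0)) := by
          apply Finset.sum_congr rfl; intro j _; rw [hvi j]
          by_cases h : i = j <;> simp [h] <;> ring
      _ = (∑ j, w j) * v i - ∑ j, (if i = j then w j * (2 * v i) else 0) := by
          rw [Finset.sum_sub_distrib, Finset.sum_mul]
      _ = v i - w i * (2 * v i) := by rw [hw1, Finset.sum_ite_eq]; simp
      _ = v i - 2 / s * u i := by
          have h1 : w i * v i = u i / s := by
            simp only [hw_def]
            rw [div_mul_eq_mul_div, mul_comm, hvu]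
          rw [show w i * (2 * v i) = 2 * (w i * v i) by ring, h1]; ring
  have hkey : A.mulVec v = ∑ j, w j • A.mulVec (vert j) := by
    have h3 : ∑ j, w j • A.mulVec (vert j) = A.mulVec (∑ j, w j • vert j) := by
      rw [← Matrix.mulVecLin_apply, map_sum]
      simp only [map_smul, Matrix.mulVecLin_apply]
    rw [h3, hsum, Matrix.mulVec_sub, Matrix.mulVec_smul, hAu]
    simp
  rw [hkey]
  apply (convex_convexHull ℝ _).sum_mem (fun j _ => hw0 j) hw1
  intro j _
  exact subset_convexHull ℝ _ ⟨vert j, hvertmem j, rfl⟩
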